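/- For any four matrices A, B, C, D in SL(2,ℂ), one has 2·tr(ABCD) = tr(A)tr(B)tr(C)tr(D) + tr(A)tr(BCD) + tr(B)tr(ACD) + tr(C)tr(ABD) + tr(D)tr(ABC) + tr(AB)tr(CD) − tr(AC)tr(BD) + tr(AD)tr(BC) − tr(A)tr(B)tr(CD) − tr(A)tr(D)tr(BC) − tr(B)tr(C)tr(AD) − tr(D)tr(C)tr(AB). -/
import Mathlib

open Matrix

/-- Trace of a product of four `SL(2, ℂ)` matrices in terms of traces of products of
at most three of them. -/
theorem trace_four_product (A B C D : Matrix (Fin 2) (Fin 2) ℂ)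
    (hA : A.det = 1) (hB : B.det = 1) (hC : C.det = 1) (hD : D.det = 1) :
    2 * (A * B * C * D).trace =
      A.trace * B.trace * C.trace * D.trace
      + A.trace * (B * C * D).trace + B.trace * (A * C * D).trace
      + C.trace * (A * B * D).trace + D.trace * (A * B * C).trace
      + (A * B).trace * (C * D).trace - (A * C).trace * (B * D).trace
      + (A * D).trace * (B * C).trace
      - A.trace * B.trace * (C * D).trace - A.trace * D.trace * (B * C).trace
      - B.trace * C.trace * (A * D).trace - D.trace * C.trace * (A * B).trace := by
  simp only [Matrix.trace_fin_two, Matrix.mul_apply, Fin.sum_univ_two]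
  ring
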